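/- Let L be a labelled transition system over Σ and let P, Q be states of L such that: every state reachable from P or from Q by a finite sequence of transitions has only finitely many outgoing transitions (finite nondeterminism), and no state reachable from P or from Q starts an infinite sequence of consecutive τ-transitions (non-divergence). If P and Q have the same singleton availability traces, availTraces(P) = availTraces(Q), then they have the same availability-sets traces, availSetsTraces(P) = availSetsTraces(Q). -/

import Mathlib

/-- An availability action over the alphabet `E`: `Sum.inl a` is an ordinary event `a ∈ Σ`,
and `Sum.inr a` is the offer `◎a` of the event `a ∈ Σ`. -/
abbrev Act (E : Type*) := E ⊕ E

variable {E : Type*}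

/-- `HasTrace step P tr` holds if `tr` is an availability trace of the state `P` of the LTS
with transition relation `step`: `tr` is the sequence of non-τ labels of some finite sequence
of consecutive derived transitions starting at `P`, where the derived transitions are the
ordinary transitions (labelled by `none` for τ, or `some a` for an event `a`), together with
self-loops `P ⟶◎a P` whenever `P` has an `a`-transition. -/
inductive HasTrace {S : Type*} (step : S → Option E → S → Prop) : S → List (Act E) → Prop
  | nil (P : S) : HasTrace step P []
  | tau {P Q : S} {tr} : step P none Q → HasTrace step Q tr → HasTrace step P tr
  | ev {P Q : S} {a : E} {tr} : step P (some a) Q → HasTrace step Q tr →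
      HasTrace step P (Sum.inl a :: tr)
  | offer {P : S} {a : E} {tr} : (∃ Q, step P (some a) Q) → HasTrace step P tr →
      HasTrace step P (Sum.inr a :: tr)

/-- The set of availability traces of a state `P`. -/
def availTraces {S : Type*} (step : S → Option E → S → Prop) (P : S) : Set (List (Act E)) :=
  {tr | HasTrace step P tr}

/-- An availability-set action: `Sum.inl a` is an ordinary event `a ∈ Σ`, and `Sum.inr A`
is the offer `◎A` of a set `A ⊆ Σ` of events. -/
abbrev ActS (E : Type*) := E ⊕ Set E

/-- `HasTraceS step P tr` holds if `tr` is an availability-sets trace of the state `P`: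
the derived transitions are the ordinary ones together with self-loops `P ⟶◎A P` whenever
every event of `A` is available at `P`. -/
inductive HasTraceS {S : Type*} (step : S → Option E → S → Prop) : S → List (ActS E) → Prop
  | nil (P : S) : HasTraceS step P []
  | tau {P Q : S} {tr} : step P none Q → HasTraceS step Q tr → HasTraceS step P tr
  | ev {P Q : S} {a : E} {tr} : step P (some a) Q → HasTraceS step Q tr →
      HasTraceS step P (Sum.inl a :: tr)
  | offer {P : S} {A : Set E} {tr} : (∀ a ∈ A, ∃ Q, step P (some a) Q) →
      HasTraceS step P tr → HasTraceS step P (Sum.inr A :: tr)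

/-- The set of availability-sets traces of a state `P`. -/
def availSetsTraces {S : Type*} (step : S → Option E → S → Prop) (P : S) :
    Set (List (ActS E)) :=
  {tr | HasTraceS step P tr}

/-- `Reach step P Q`: `Q` is reachable from `P` by a finite sequence of transitions. -/
def Reach {E S : Type*} (step : S → Option E → S → Prop) : S → S → Prop :=
  Relation.ReflTransGen (fun P Q => ∃ α, step P α Q)

namespace AvailAux

variable {E S : Type*}

/-- τ-reachability. -/
def TauR (step : S → Option E → S → Prop) : S → S → Prop :=
  Relation.ReflTransGen (fun x y => step x none y)

lemma tauR_reach {step : S → Option E → S → Prop} {x y : S} (h : TauR step x y) :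
    Reach step x y :=
  by
  unfold TauR at h
  induction h with
  | refl => exact Relation.ReflTransGen.refl
  | tail _ hs ih => exact Relation.ReflTransGen.tail ih ⟨none, hs⟩

lemma hasTrace_of_tauR {step : S → Option E → S → Prop} {x y : S} {tr}
    (h : TauR step x y) (ht : HasTrace step y tr) : HasTrace step x tr := by
  induction h using Relation.ReflTransGen.head_induction_on with
  | refl => exact ht
  | head hstep _ ih => exact HasTrace.tau hstep ih

lemma hasTraceS_of_tauR {step : S → Option E → S → Prop} {x y : S} {tr}
    (h : TauR step x y) (ht : HasTraceS step y tr) : HasTraceS step x tr := by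
  induction h using Relation.ReflTransGen.head_induction_on with
  | refl => exact ht
  | head hstep _ ih => exact HasTraceS.tau hstep ih

/-- Dilution: `Dil s t` iff `s` is obtained from `t` by deleting some offers. -/
inductive Dil : List (Act E) → List (Act E) → Prop
  | nil : Dil [] []
  | cons (x) {s t} : Dil s t → Dil (x :: s) (x :: t)
  | drop (a) {s t} : Dil s t → Dil s (Sum.inr a :: t)

lemma Dil.refl : ∀ t : List (Act E), Dil t t
  | [] => Dil.nil
  | x :: t => Dil.cons x (Dil.refl t)

lemma Dil.append {s1 t1 s2 t2 : List (Act E)} (h1 : Dil s1 t1) (h2 : Dil s2 t2) :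
    Dil (s1 ++ s2) (t1 ++ t2) := by
  induction h1 with
  | nil => simpa
  | cons x _ ih => exact Dil.cons x ih
  | drop a _ ih => exact Dil.drop a ih

lemma Dil.dropAll {u : List (Act E)} (hu : ∀ x ∈ u, ∃ a, x = Sum.inr a)
    {s t : List (Act E)} (h : Dil s t) : Dil s (u ++ t) := by
  induction u with
  | nil => simpa
  | cons x u ih =>
    obtain ⟨a, rfl⟩ := hu x List.mem_cons_self
    exact Dil.drop a (ih fun y hy => hu y (List.mem_cons_of_mem _ hy))

lemma hasTrace_dil {step : S → Option E → S → Prop} :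
    ∀ {P t}, HasTrace step P t → ∀ {s}, Dil s t → HasTrace step P s := by
  intro P t h
  induction h with
  | nil P =>
    intro s hd
    cases hd
    exact HasTrace.nil P
  | tau hstep _ ih => intro s hd; exact HasTrace.tau hstep (ih hd)
  | ev hstep _ ih =>
    intro s hd
    cases hd with
    | cons x hd' => exact HasTrace.ev hstep (ih hd')
  | offer hav _ ih =>
    intro s hd
    cases hd with
    | cons x hd' => exact HasTrace.offer hav (ih hd')
    | drop a hd' => exact ih hd'

/-- Singleton traces with the number of leading internal steps (before the first event). -/
inductive HTN (step : S → Option E → S → Prop) : S → List (Act E) → ℕ → Prop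
  | nil (P : S) : HTN step P [] 0
  | tau {P Q tr n} : step P none Q → HTN step Q tr n → HTN step P tr (n + 1)
  | ev {P Q a tr} : step P (some a) Q → HasTrace step Q tr → HTN step P (Sum.inl a :: tr) 0
  | offer {P a tr n} : (∃ Q, step P (some a) Q) → HTN step P tr n →
      HTN step P (Sum.inr a :: tr) n

lemma htn_of_hasTrace {step : S → Option E → S → Prop} {P tr}
    (h : HasTrace step P tr) : ∃ n, HTN step P tr n := by
  induction h with
  | nil P => exact ⟨0, HTN.nil P⟩
  | tau hstep _ ih => obtain ⟨n, hn⟩ := ih; exact ⟨n + 1, HTN.tau hstep hn⟩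
  | ev hstep htr _ => exact ⟨0, HTN.ev hstep htr⟩
  | offer hav _ ih => obtain ⟨n, hn⟩ := ih; exact ⟨n, HTN.offer hav hn⟩

lemma hasTrace_of_htn {step : S → Option E → S → Prop} {P tr n}
    (h : HTN step P tr n) : HasTrace step P tr := by
  induction h with
  | nil P => exact HasTrace.nil P
  | tau hstep _ ih => exact HasTrace.tau hstep ih
  | ev hstep htr => exact HasTrace.ev hstep htr
  | offer hav _ ih => exact HasTrace.offer hav ih

lemma htn_dil {step : S → Option E → S → Prop} :
    ∀ {P t n}, HTN step P t n → ∀ {s}, Dil s t → HTN step P s n := by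
  intro P t n h
  induction h with
  | nil P =>
    intro s hd
    cases hd
    exact HTN.nil P
  | tau hstep _ ih => intro s hd; exact HTN.tau hstep (ih hd)
  | ev hstep htr =>
    intro s hd
    cases hd with
    | cons x hd' => exact HTN.ev hstep (hasTrace_dil htr hd')
  | offer hav _ ih =>
    intro s hd
    cases hd with
    | cons x hd' => exact HTN.offer hav (ih hd')
    | drop a hd' => exact ih hd'

/-- Analysis of a run through a block of offers: either the whole block of offers happens at
the current state, or an internal step is taken somewhere in the middle of the block. -/
lemma block_analysis {step : S → Option E → S → Prop} :
    ∀ {R tr n}, HTN step R tr n → ∀ (L' : List E) (more : List (Act E)),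
      tr = (L'.map Sum.inr) ++ more →
      ((∀ a ∈ L', ∃ Q, step R (some a) Q) ∧ HTN step R more n)
      ∨ (∃ R' : S, ∃ n' : ℕ, ∃ L₂ : List E, step R none R' ∧ n = n' + 1 ∧
          HTN step R' ((L₂.map Sum.inr) ++ more) n') := by
  intro R tr n h
  induction h with
  | nil P =>
    intro L' more heq
    rcases List.append_eq_nil_iff.mp heq.symm with ⟨hL, hm⟩
    rw [List.map_eq_nil_iff] at hL
    subst hL; subst hm
    exact Or.inl ⟨by simp, HTN.nil P⟩
  | tau hstep h' _ =>
    intro L' more heq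
    exact Or.inr ⟨_, _, L', hstep, rfl, heq ▸ h'⟩
  | ev hstep htr =>
    intro L' more heq
    cases L' with
    | nil =>
      simp only [List.map_nil, List.nil_append] at heq
      exact Or.inl ⟨by simp, heq ▸ HTN.ev hstep htr⟩
    | cons b L'' => simp at heq
  | offer hav h' ih =>
    intro L' more heq
    cases L' with
    | nil =>
      simp only [List.map_nil, List.nil_append] at heq
      exact Or.inl ⟨by simp, heq ▸ HTN.offer hav h'⟩
    | cons b L'' =>
      simp only [List.map_cons, List.cons_append, List.cons.injEq, Sum.inr.injEq] at heq
      obtain ⟨rfl, heq⟩ := heq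
      rcases ih L'' more heq with ⟨havs, hm⟩ | hr
      · refine Or.inl ⟨?_, hm⟩
        intro a ha
        rcases List.mem_cons.mp ha with rfl | ha
        · exact hav
        · exact havs a ha
      · exact Or.inr hr

lemma mem_flat_inr {L : List E} {N : ℕ} :
    ∀ x ∈ (List.replicate N (L.map Sum.inr)).flatten, ∃ a : E, x = (Sum.inr a : Act E) := by
  intro x hx
  rw [List.mem_flatten] at hx
  obtain ⟨l, hl, hxl⟩ := hx
  rw [List.mem_replicate] at hl
  rw [hl.2, List.mem_map] at hxl
  obtain ⟨a, _, rfl⟩ := hxl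
  exact ⟨a, rfl⟩

/-- Key extraction lemma: if a run goes through more blocks of offers of `L` than it has
leading internal steps, then some block happens entirely at a single state, at which
therefore every event of `L` is available. -/
lemma key {step : S → Option E → S → Prop} (L : List E) :
    ∀ n : ℕ, ∀ {R : S} {N : ℕ} {rest : List (Act E)},
      HTN step R ((List.replicate N (L.map Sum.inr)).flatten ++ rest) n → n < N →
      ∃ R', TauR step R R' ∧ (∀ a ∈ L, ∃ Q, step R' (some a) Q) ∧ HasTrace step R' rest := by
  intro n
  induction n using Nat.strong_induction_on with
  | _ n ih =>
    intro R N rest h hn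
    obtain ⟨N₁, rfl⟩ : ∃ N₁, N = N₁ + 1 := ⟨N - 1, by omega⟩
    rw [List.replicate_succ, List.flatten_cons, List.append_assoc] at h
    rcases block_analysis h L ((List.replicate N₁ (L.map Sum.inr)).flatten ++ rest) rfl with
      ⟨hav, hm⟩ | ⟨R', n', L₂, hstep, rfl, h'⟩
    · refine ⟨R, Relation.ReflTransGen.refl, hav, ?_⟩
      exact hasTrace_dil (hasTrace_of_htn hm) (Dil.dropAll mem_flat_inr (Dil.refl rest))
    · have h'' : HTN step R' ((List.replicate N₁ (L.map Sum.inr)).flatten ++ rest) n' := by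
        refine htn_dil h' (Dil.dropAll ?_ (Dil.refl _))
        intro x hx
        rw [List.mem_map] at hx
        obtain ⟨a, _, rfl⟩ := hx
        exact ⟨a, rfl⟩
      obtain ⟨R'', htau, hav, ht⟩ := ih n' (by omega) h'' (by omega)
      exact ⟨R'', Relation.ReflTransGen.head hstep htau, hav, ht⟩
open Classical in
/-- A list enumerating a (finite) set. -/
noncomputable def listOf (A : Set E) : List E :=
  if h : A.Finite then h.toFinset.toList else []

lemma mem_listOf {A : Set E} (hA : A.Finite) {a : E} : a ∈ listOf A ↔ a ∈ A := by
  rw [listOf, dif_pos hA, Finset.mem_toList, Set.Finite.mem_toFinset]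

/-- The encoding of an availability-sets trace as a singleton availability trace, where each
set-offer is replaced by `N` repetitions of the block of offers of its elements. -/
noncomputable def enc (N : ℕ) : List (ActS E) → List (Act E)
  | [] => []
  | Sum.inl a :: tr => Sum.inl a :: enc N tr
  | Sum.inr A :: tr => (List.replicate N ((listOf A).map Sum.inr)).flatten ++ enc N tr

lemma dil_enc {N N' : ℕ} (h : N ≤ N') : ∀ tr : List (ActS E), Dil (enc N tr) (enc N' tr) := by
  intro tr
  induction tr with
  | nil => exact Dil.nil
  | cons x tr ih =>
    cases x with
    | inl a => exact Dil.cons _ ih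
    | inr A =>
      show Dil ((List.replicate N ((listOf A).map Sum.inr)).flatten ++ enc N tr)
        ((List.replicate N' ((listOf A).map Sum.inr)).flatten ++ enc N' tr)
      have hrep : List.replicate N' ((listOf A).map (Sum.inr : E → Act E)) =
          List.replicate (N' - N) ((listOf A).map (Sum.inr : E → Act E)) ++
            List.replicate N ((listOf A).map (Sum.inr : E → Act E)) := by
        rw [← List.replicate_add]
        congr 1
        omega
      rw [hrep, List.flatten_append, List.append_assoc]
      exact Dil.dropAll mem_flat_inr (Dil.append (Dil.refl _) ih)

lemma inv_inl {step : S → Option E → S → Prop} :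
    ∀ {R t}, HasTrace step R t → ∀ {a : E} {s}, t = Sum.inl a :: s →
      ∃ S' R' : S, TauR step R S' ∧ step S' (some a) R' ∧ HasTrace step R' s := by
  intro R t h
  induction h with
  | nil P => intro a s heq; exact absurd heq (by simp)
  | tau hstep _ ih =>
    intro a s heq
    obtain ⟨S', R', h1, h2, h3⟩ := ih heq
    exact ⟨S', R', Relation.ReflTransGen.head hstep h1, h2, h3⟩
  | ev hstep htr =>
    intro a s heq
    simp only [List.cons.injEq, Sum.inl.injEq] at heq
    obtain ⟨rfl, rfl⟩ := heq
    exact ⟨_, _, Relation.ReflTransGen.refl, hstep, htr⟩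
  | offer hav htr _ => intro a s heq; simp at heq

lemma avail_finite {step : S → Option E → S → Prop} {R : S}
    (h : {αR' : Option E × S | step R αR'.1 αR'.2}.Finite) :
    {a : E | ∃ Q, step R (some a) Q}.Finite := by
  have h1 : (Prod.fst '' {αR' : Option E × S | step R αR'.1 αR'.2}).Finite := h.image _
  have h2 : {a : E | ∃ Q, step R (some a) Q} =
      some ⁻¹' (Prod.fst '' {αR' : Option E × S | step R αR'.1 αR'.2}) := by
    ext a
    simp only [Set.mem_setOf_eq, Set.mem_preimage, Set.mem_image]
    constructor
    · rintro ⟨Q, hQ⟩; exact ⟨(some a, Q), hQ, rfl⟩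
    · rintro ⟨⟨α, Q⟩, hQ, rfl⟩; exact ⟨Q, hQ⟩
  rw [h2]
  exact Set.Finite.preimage ((Option.some_injective E).injOn) h1

lemma tausucc_finite {step : S → Option E → S → Prop} {R : S}
    (h : {αR' : Option E × S | step R αR'.1 αR'.2}.Finite) :
    {R' : S | step R none R'}.Finite :=
  Set.Finite.subset (h.image Prod.snd) (fun R' hR' => ⟨(none, R'), hR', rfl⟩)

lemma asucc_finite {step : S → Option E → S → Prop} {R : S} {a : E}
    (h : {αR' : Option E × S | step R αR'.1 αR'.2}.Finite) :
    {R' : S | step R (some a) R'}.Finite :=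
  Set.Finite.subset (h.image Prod.snd) (fun R' hR' => ⟨(some a, R'), hR', rfl⟩)

lemma exists_chain_of_not_acc {r : S → S → Prop} {x : S} (h : ¬ Acc (flip r) x) :
    ∃ f : ℕ → S, f 0 = x ∧ ∀ n, r (f n) (f (n + 1)) := by
  have key : ∀ y : S, ¬ Acc (flip r) y → ∃ z, r y z ∧ ¬ Acc (flip r) z := by
    intro y hy
    by_contra hc
    push_neg at hc
    exact hy (Acc.intro y fun z hz => hc z hz)
  let g : {y : S // ¬ Acc (flip r) y} → {y : S // ¬ Acc (flip r) y} := fun y =>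
    ⟨Classical.choose (key y.1 y.2), (Classical.choose_spec (key y.1 y.2)).2⟩
  have hg : ∀ y, r y.1 (g y).1 := fun y => (Classical.choose_spec (key y.1 y.2)).1
  refine ⟨fun n => (g^[n] ⟨x, h⟩).1, by simp, fun n => ?_⟩
  show r (g^[n] ⟨x, h⟩).1 (g^[n + 1] ⟨x, h⟩).1
  rw [Function.iterate_succ_apply' g n]
  exact hg _

lemma tauReach_finite {step : S → Option E → S → Prop} {R : S}
    (hacc : Acc (flip (fun x y => step x none y)) R)
    (hsucc : ∀ R', TauR step R R' → {R'' : S | step R' none R''}.Finite) :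
    {R' : S | TauR step R R'}.Finite := by
  induction hacc with
  | intro x hx ih =>
    have hsx : {y : S | step x none y}.Finite := hsucc x Relation.ReflTransGen.refl
    have hsub : {R' : S | TauR step x R'} ⊆
        insert x (⋃ y ∈ {y : S | step x none y}, {R' : S | TauR step y R'}) := by
      intro z hz
      rcases Relation.ReflTransGen.cases_head hz with rfl | ⟨c, hc, hzc⟩
      · exact Set.mem_insert _ _
      · exact Set.mem_insert_of_mem _ (Set.mem_biUnion hc hzc)
    exact Set.Finite.subset
      (Set.Finite.insert x (hsx.biUnion fun y hy =>
        ih y hy fun R' hR' => hsucc R' (Relation.ReflTransGen.head hy hR'))) hsub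

lemma exists_uniform {α : Type*} {F : Set α} (hF : F.Finite) (p : α → ℕ → Prop)
    (mono : ∀ x m m', m ≤ m' → p x m → p x m') (h : ∀ x ∈ F, ∃ m, p x m) :
    ∃ M, ∀ x ∈ F, p x M := by
  revert h
  refine Set.Finite.induction_on _ hF (fun _ => ⟨0, fun x hx => absurd hx (Set.notMem_empty x)⟩) ?_
  intro a s _ _ ih h
  obtain ⟨M, hM⟩ := ih fun x hx => h x (Set.mem_insert_of_mem _ hx)
  obtain ⟨m, hm⟩ := h a (Set.mem_insert _ _)
  refine ⟨max m M, fun x hx => ?_⟩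
  rcases Set.mem_insert_iff.mp hx with rfl | hx
  · exact mono x m _ (le_max_left _ _) hm
  · exact mono x M _ (le_max_right _ _) (hM x hx)

lemma pigeonhole {α : Type*} {F : Set α} (hF : F.Finite) (p : α → ℕ → Prop)
    (anti : ∀ x m m', m ≤ m' → p x m' → p x m) (h : ∀ N, ∃ x ∈ F, p x N) :
    ∃ x ∈ F, ∀ N, p x N := by
  by_contra hc
  push_neg at hc
  obtain ⟨M, hM⟩ := exists_uniform hF (fun x m => ¬ p x m)
    (fun x m m' hmm hnp hp => hnp (anti x m m' hmm hp)) hc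
  obtain ⟨x, hxF, hx⟩ := h M
  exact hM x hxF hx

lemma htn_succ_bound {step : S → Option E → S → Prop} {x : S} {M : ℕ}
    (hb : ∀ y, step x none y → ∀ tr n, HTN step y tr n → n ≤ M) :
    ∀ tr n, HTN step x tr n → n ≤ M + 1 := by
  have main : ∀ P tr n, HTN step P tr n → P = x → n ≤ M + 1 := by
    intro P tr n h
    induction h with
    | nil P => omega
    | tau hstep h' _ => rintro rfl; exact Nat.succ_le_succ (hb _ hstep _ _ h')
    | ev hstep htr => omega
    | offer hav h' ih => exact ih
  exact fun tr n h => main x tr n h rfl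

lemma htn_bound {step : S → Option E → S → Prop} {R : S}
    (hacc : Acc (flip (fun x y => step x none y)) R)
    (hsucc : ∀ R', TauR step R R' → {R'' : S | step R' none R''}.Finite) :
    ∃ M, ∀ tr n, HTN step R tr n → n ≤ M := by
  induction hacc with
  | intro x hx ih =>
    have hsx : {y : S | step x none y}.Finite := hsucc x Relation.ReflTransGen.refl
    have h1 : ∀ y ∈ {y : S | step x none y}, ∃ m, ∀ tr n, HTN step y tr n → n ≤ m :=
      fun y hy => ih y hy fun R' hR' => hsucc R' (Relation.ReflTransGen.head hy hR')
    obtain ⟨M, hM⟩ := exists_uniform hsx _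
      (fun y m m' hmm hp tr n h => (hp tr n h).trans hmm) h1
    exact ⟨M + 1, htn_succ_bound hM⟩
lemma offers_prefix {step : S → Option E → S → Prop} {P : S} {L : List E}
    (hav : ∀ a ∈ L, ∃ Q, step P (some a) Q) {s : List (Act E)} (hs : HasTrace step P s) :
    HasTrace step P (L.map Sum.inr ++ s) := by
  induction L with
  | nil => simpa
  | cons a L ih =>
    exact HasTrace.offer (hav a List.mem_cons_self)
      (ih fun b hb => hav b (List.mem_cons_of_mem _ hb))

lemma enc_block {step : S → Option E → S → Prop} {P : S} {L : List E}
    (hav : ∀ a ∈ L, ∃ Q, step P (some a) Q) {s : List (Act E)} (hs : HasTrace step P s)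
    (N : ℕ) : HasTrace step P ((List.replicate N (L.map Sum.inr)).flatten ++ s) := by
  induction N with
  | zero => simpa
  | succ N ihN =>
    rw [List.replicate_succ, List.flatten_cons, List.append_assoc]
    exact offers_prefix hav ihN

lemma enc_trace {step : S → Option E → S → Prop} :
    ∀ {P : S} {tr}, HasTraceS step P tr →
      (∀ R, Reach step P R → {αR' : Option E × S | step R αR'.1 αR'.2}.Finite) →
      ∀ N, HasTrace step P (enc N tr) := by
  intro P tr h
  induction h with
  | nil P => intro _ N; exact HasTrace.nil P
  | tau hstep _ ih =>
    intro hf N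
    exact HasTrace.tau hstep (ih (fun R hR => hf R (Relation.ReflTransGen.head ⟨_, hstep⟩ hR)) N)
  | ev hstep _ ih =>
    intro hf N
    exact HasTrace.ev hstep (ih (fun R hR => hf R (Relation.ReflTransGen.head ⟨_, hstep⟩ hR)) N)
  | @offer P A tr hav _ ih =>
    intro hf N
    have hAfin : A.Finite :=
      Set.Finite.subset (avail_finite (hf P Relation.ReflTransGen.refl)) fun a ha => hav a ha
    show HasTrace step P ((List.replicate N ((listOf A).map Sum.inr)).flatten ++ enc N tr)
    exact enc_block (fun a haL => hav a ((mem_listOf hAfin).mp haL)) (ih hf N) N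

lemma sets_finite {step : S → Option E → S → Prop} :
    ∀ {P : S} {tr}, HasTraceS step P tr →
      (∀ R, Reach step P R → {αR' : Option E × S | step R αR'.1 αR'.2}.Finite) →
      ∀ A : Set E, Sum.inr A ∈ tr → A.Finite := by
  intro P tr h
  induction h with
  | nil P => intro _ A hA; exact absurd hA List.not_mem_nil
  | tau hstep _ ih =>
    intro hf A hA
    exact ih (fun R hR => hf R (Relation.ReflTransGen.head ⟨_, hstep⟩ hR)) A hA
  | ev hstep _ ih =>
    intro hf A hA
    rcases List.mem_cons.mp hA with h' | h'
    · exact absurd h' (by simp)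
    · exact ih (fun R hR => hf R (Relation.ReflTransGen.head ⟨_, hstep⟩ hR)) A h'
  | @offer P A₀ tr hav _ ih =>
    intro hf A hA
    rcases List.mem_cons.mp hA with h' | h'
    · obtain rfl : A = A₀ := by simpa using h'
      exact Set.Finite.subset (avail_finite (hf P Relation.ReflTransGen.refl))
        fun a ha => hav a ha
    · exact ih hf A h'

lemma dec {step : S → Option E → S → Prop} :
    ∀ (tr : List (ActS E)) (R : S),
      (∀ R', Reach step R R' → {αR' : Option E × S | step R' αR'.1 αR'.2}.Finite) →
      (∀ R', Reach step R R' → ¬∃ f : ℕ → S, f 0 = R' ∧ ∀ n, step (f n) none (f (n + 1))) →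
      (∀ A : Set E, Sum.inr A ∈ tr → A.Finite) →
      (∀ N, HasTrace step R (enc N tr)) →
      HasTraceS step R tr := by
  intro tr
  induction tr with
  | nil => intro R _ _ _ _; exact HasTraceS.nil R
  | cons x tr ih =>
    intro R hfin hnd hsets hN
    have hacc : Acc (flip (fun x y => step x none y)) R := by
      by_contra hA
      exact hnd R Relation.ReflTransGen.refl (exists_chain_of_not_acc hA)
    have htsucc : ∀ R', TauR step R R' → {R'' : S | step R' none R''}.Finite :=
      fun R' hR' => tausucc_finite (hfin R' (tauR_reach hR'))
    have hreachfin : {R' : S | TauR step R R'}.Finite := tauReach_finite hacc htsucc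
    cases x with
    | inl a =>
      have h1 : ∀ N, ∃ p ∈ {p : S × S | TauR step R p.1 ∧ step p.1 (some a) p.2},
          HasTrace step p.2 (enc N tr) := by
        intro N
        obtain ⟨S', R', h1, h2, h3⟩ := inv_inl (hN N) rfl
        exact ⟨(S', R'), ⟨h1, h2⟩, h3⟩
      have hFfin : {p : S × S | TauR step R p.1 ∧ step p.1 (some a) p.2}.Finite := by
        have hsuccs : (⋃ S' ∈ {R' : S | TauR step R R'},
            {R' : S | step S' (some a) R'}).Finite :=
          hreachfin.biUnion fun S' hS' => asucc_finite (hfin S' (tauR_reach hS'))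
        refine Set.Finite.subset (hreachfin.prod hsuccs) ?_
        rintro ⟨S', R'⟩ ⟨h1, h2⟩
        exact ⟨h1, Set.mem_biUnion h1 h2⟩
      obtain ⟨⟨S', R'⟩, ⟨htau, hstep⟩, hall⟩ := pigeonhole hFfin
        (fun p N => HasTrace step p.2 (enc N tr))
        (fun p m m' hmm hp => hasTrace_dil hp (dil_enc hmm tr)) h1
      have hRreach : Reach step R R' :=
        Relation.ReflTransGen.tail (tauR_reach htau) ⟨some a, hstep⟩
      have hts : HasTraceS step R' tr :=
        ih R' (fun R'' h => hfin R'' (hRreach.trans h))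
          (fun R'' h => hnd R'' (hRreach.trans h))
          (fun A hA => hsets A (List.mem_cons_of_mem _ hA)) hall
      exact hasTraceS_of_tauR htau (HasTraceS.ev hstep hts)
    | inr A =>
      have hAfin : A.Finite := hsets A List.mem_cons_self
      obtain ⟨M, hM⟩ := htn_bound hacc htsucc
      have h1 : ∀ N, ∃ x ∈ {R' : S | TauR step R R'},
          (∀ a ∈ A, ∃ Q, step x (some a) Q) ∧ HasTrace step x (enc N tr) := by
        intro N
        have hh := hN (max N (M + 1))
        rw [show enc (max N (M + 1)) (Sum.inr A :: tr) =
            (List.replicate (max N (M + 1)) ((listOf A).map Sum.inr)).flatten ++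
              enc (max N (M + 1)) tr from rfl] at hh
        obtain ⟨n, hn⟩ := htn_of_hasTrace hh
        have hnM : n ≤ M := hM _ _ hn
        obtain ⟨R', htau, hav, ht⟩ := key (listOf A) n hn (by omega)
        exact ⟨R', htau, fun a ha => hav a ((mem_listOf hAfin).mpr ha),
          hasTrace_dil ht (dil_enc (le_max_left _ _) tr)⟩
      obtain ⟨R', htau, hall⟩ := pigeonhole hreachfin _
        (fun x m m' hmm hp => ⟨hp.1, hasTrace_dil hp.2 (dil_enc hmm tr)⟩) h1
      have hav : ∀ a ∈ A, ∃ Q, step R' (some a) Q := (hall 0).1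
      have hRreach : Reach step R R' := tauR_reach htau
      have hts : HasTraceS step R' tr :=
        ih R' (fun R'' h => hfin R'' (hRreach.trans h))
          (fun R'' h => hnd R'' (hRreach.trans h))
          (fun A' hA' => hsets A' (List.mem_cons_of_mem _ hA'))
          (fun N => (hall N).2)
      exact hasTraceS_of_tauR htau (HasTraceS.offer hav hts)

end AvailAux

theorem singleton_eq_implies_sets_eq {E S : Type*} (step : S → Option E → S → Prop)
    (P Q : S)
    (hfin : ∀ R : S, (Reach step P R ∨ Reach step Q R) →
      {αR' : Option E × S | step R αR'.1 αR'.2}.Finite)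
    (hnodiv : ∀ R : S, (Reach step P R ∨ Reach step Q R) →
      ¬∃ f : ℕ → S, f 0 = R ∧ ∀ n, step (f n) none (f (n + 1)))
    (h : availTraces step P = availTraces step Q) :
    availSetsTraces step P = availSetsTraces step Q := by
  have main : ∀ P' Q' : S,
      (∀ R, Reach step P' R → {αR' : Option E × S | step R αR'.1 αR'.2}.Finite) →
      (∀ R, Reach step Q' R → {αR' : Option E × S | step R αR'.1 αR'.2}.Finite) →
      (∀ R, Reach step Q' R → ¬∃ f : ℕ → S, f 0 = R ∧ ∀ n, step (f n) none (f (n + 1))) →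
      availTraces step P' = availTraces step Q' →
      availSetsTraces step P' ⊆ availSetsTraces step Q' := by
    intro P' Q' hfP hfQ hnQ heq tr htr
    have htr' : HasTraceS step P' tr := htr
    have hsets := AvailAux.sets_finite htr' hfP
    have hP : ∀ N, HasTrace step P' (AvailAux.enc N tr) := AvailAux.enc_trace htr' hfP
    have hQ : ∀ N, HasTrace step Q' (AvailAux.enc N tr) := by
      intro N
      have hmem : AvailAux.enc N tr ∈ availTraces step P' := hP N
      rw [heq] at hmem
      exact hmem
    exact AvailAux.dec tr Q' hfQ hnQ hsets hQ
  apply Set.Subset.antisymm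
  · exact main P Q (fun R hR => hfin R (Or.inl hR)) (fun R hR => hfin R (Or.inr hR))
      (fun R hR => hnodiv R (Or.inr hR)) h
  · exact main Q P (fun R hR => hfin R (Or.inr hR)) (fun R hR => hfin R (Or.inl hR))
      (fun R hR => hnodiv R (Or.inl hR)) h.symm
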